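/- arXiv:1105.5215 — 2 statements merged into one kernel-verified Lean document; each statement's English description precedes it below -/
import Mathlib

section
/- Let A be a complex L × M matrix with the property that every set of at most L columns of A is linearly independent. Let Γ₁, Γ₂ ⊆ {1, …, M} with |Γ₁| ≤ L − 1 and |Γ₂| ≤ L − 1, and let S₁, S₂ be Hermitian positive definite matrices of sizes |Γ₁| × |Γ₁| and |Γ₂| × |Γ₂| respectively. If A_{Γ₁} S₁ A_{Γ₁}^H = A_{Γ₂} S₂ A_{Γ₂}^H, then Γ₁ = Γ₂ and S₁ = S₂ (where A_Γ denotes the submatrix of columns of A indexed by Γ). -/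
open scoped ComplexOrder

open Matrix in
private lemma stmt7_quad_eq {L M : ℕ} (A : Matrix (Fin L) (Fin M) ℂ)
    (S : Matrix (Fin M) (Fin M) ℂ) (x : Fin L → ℂ) :
    star x ⬝ᵥ (A * S * A.conjTranspose).mulVec x
      = star (A.conjTranspose.mulVec x) ⬝ᵥ S.mulVec (A.conjTranspose.mulVec x) := by
  rw [← Matrix.mulVec_mulVec, ← Matrix.mulVec_mulVec, Matrix.dotProduct_mulVec,
    Matrix.star_mulVec, Matrix.conjTranspose_conjTranspose, Matrix.dotProduct_mulVec]

open Matrix in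
private lemma stmt7_quad_restrict {M : ℕ} (S : Matrix (Fin M) (Fin M) ℂ) (Γ : Finset (Fin M))
    (hsupp : ∀ i j, i ∉ Γ ∨ j ∉ Γ → S i j = 0) (w : Fin M → ℂ) :
    star w ⬝ᵥ S.mulVec w
      = star (fun k : Γ => w k) ⬝ᵥ (S.submatrix (fun i : Γ => (i : Fin M))
          (fun j : Γ => (j : Fin M))).mulVec (fun k : Γ => w k) := by
  simp only [dotProduct, Matrix.mulVec, dotProduct, Matrix.submatrix_apply, Pi.star_apply]
  rw [Finset.sum_coe_sort Γ (fun k => star (w k) * ∑ l : Γ, S k l * w l)]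
  have hin : ∀ k : Fin M, (∑ l : Γ, S k l * w l) = ∑ l, S k l * w l := by
    intro k
    rw [Finset.sum_coe_sort Γ (fun l => S k l * w l)]
    exact Finset.sum_subset (Finset.subset_univ Γ)
      (fun l _ hl => by rw [hsupp k l (Or.inr hl), zero_mul])
  simp only [hin]
  exact (Finset.sum_subset (Finset.subset_univ Γ) (fun k _ hk => by
    simp only [Finset.mul_sum]
    refine Finset.sum_eq_zero fun l _ => ?_
    rw [hsupp k l (Or.inl hk)]; ring)).symm

open Matrix in
private lemma stmt7_cancel_aux {L M N : ℕ} (A : Matrix (Fin L) (Fin M) ℂ)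
    (hA : ∀ t : Finset (Fin M), t.card ≤ L →
      LinearIndependent ℂ (fun j : t => fun i => A i (j : Fin M)))
    (Γ : Finset (Fin M)) (hΓ : Γ.card ≤ L) (B : Matrix (Fin M) (Fin N) ℂ)
    (hB : ∀ k c, k ∉ Γ → B k c = 0) (h : A * B = 0) : B = 0 := by
  ext k c
  by_cases hk : k ∈ Γ
  · have li := hA Γ hΓ
    rw [Fintype.linearIndependent_iff] at li
    have hsum : (∑ kk : Γ, B (kk : Fin M) c • (fun i => A i (kk : Fin M))) = 0 := by
      funext i
      simp only [Finset.sum_apply, Pi.smul_apply, smul_eq_mul, Pi.zero_apply]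
      rw [Finset.sum_coe_sort Γ (fun kk => B kk c * A i kk)]
      rw [Finset.sum_subset (Finset.subset_univ Γ)
        (fun kk _ hkk => by rw [hB kk c hkk, zero_mul])]
      have := congrFun (congrFun h i) c
      simpa [Matrix.mul_apply, mul_comm] using this
    exact li (fun kk : Γ => B (kk : Fin M) c) hsum ⟨k, hk⟩
  · simp [hB k c hk]

open Matrix in
private lemma stmt7_subset_aux {L M : ℕ} (A : Matrix (Fin L) (Fin M) ℂ)
    (hA : ∀ t : Finset (Fin M), t.card ≤ L →
      LinearIndependent ℂ (fun j : t => fun i => A i (j : Fin M)))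
    (Γa Γb : Finset (Fin M)) (hΓa : Γa.card ≤ L - 1) (hΓb : Γb.card ≤ L - 1)
    (Sa Sb : Matrix (Fin M) (Fin M) ℂ)
    (hsa : ∀ i j, i ∉ Γa ∨ j ∉ Γa → Sa i j = 0)
    (hsb : ∀ i j, i ∉ Γb ∨ j ∉ Γb → Sb i j = 0)
    (pda : (Sa.submatrix (fun i : Γa => (i : Fin M)) (fun j : Γa => (j : Fin M))).PosDef)
    (heq : A * Sa * A.conjTranspose = A * Sb * A.conjTranspose) : Γa ⊆ Γb := by
  intro j hj
  by_contra hjb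
  have hL2 : 2 ≤ L := by
    have h1 : 1 ≤ Γa.card := Finset.card_pos.2 ⟨j, hj⟩
    omega
  set f : Fin M → ((Fin L → ℂ) →ₗ[ℂ] ℂ) :=
    fun k => (LinearMap.proj k).comp (Matrix.mulVecLin A.conjTranspose) with hf
  have hfapp : ∀ k x, f k x = A.conjTranspose.mulVec x k := fun k x => rfl
  have hker : ⨅ (k : Γb), LinearMap.ker (f (k : Fin M)) ≤ LinearMap.ker (f j) := by
    intro x hx
    simp only [Submodule.mem_iInf, LinearMap.mem_ker] at hx
    set w := A.conjTranspose.mulVec x with hw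
    have hwb : ∀ k : Γb, w (k : Fin M) = 0 := fun k => hx k
    have hqb : star x ⬝ᵥ (A * Sb * A.conjTranspose).mulVec x = 0 := by
      rw [stmt7_quad_eq, stmt7_quad_restrict Sb Γb hsb]
      have : (fun k : Γb => w (k : Fin M)) = 0 := funext fun k => hwb k
      rw [this]
      simp
    have hqa : star (fun k : Γa => w (k : Fin M)) ⬝ᵥ
        (Sa.submatrix (fun i : Γa => (i : Fin M)) (fun j : Γa => (j : Fin M))).mulVec
          (fun k : Γa => w (k : Fin M)) = 0 := by
      rw [← stmt7_quad_restrict Sa Γa hsa, ← stmt7_quad_eq, heq, hqb]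
    have hua : (fun k : Γa => w (k : Fin M)) = 0 := by
      by_contra hne
      have := pda.dotProduct_mulVec_pos hne
      rw [hqa] at this
      exact lt_irrefl 0 this
    have : w j = 0 := congrFun hua ⟨j, hj⟩
    exact this
  have hmem := mem_span_of_iInf_ker_le_ker (ι := Γb) hker
  obtain ⟨c, hc⟩ := (Submodule.mem_span_range_iff_exists_fun ℂ).1 hmem
  have hcolrel : ∀ i, A i j = ∑ k : Γb, star (c k) * A i (k : Fin M) := by
    intro i
    have hx := LinearMap.congr_fun hc (Pi.single i 1)
    simp only [LinearMap.coe_sum, Finset.sum_apply, LinearMap.smul_apply, smul_eq_mul,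
      hfapp, Matrix.mulVec_single, Matrix.conjTranspose_apply, mul_one] at hx
    have := congrArg star hx
    simpa [star_sum, star_mul', mul_comm] using this.symm
  set t : Finset (Fin M) := insert j Γb with ht
  have hcard : t.card ≤ L := by
    have h2 : t.card ≤ Γb.card + 1 := by rw [ht]; exact Finset.card_insert_le j Γb
    omega
  have li := hA t hcard
  have hjt : j ∈ t := Finset.mem_insert_self j Γb
  set v : t → (Fin L → ℂ) := fun k => fun i => A i (k : Fin M) with hv
  have hnotmem := li.notMem_span_image (s := {k : t | (k : Fin M) ∈ Γb})
    (x := ⟨j, hjt⟩) (by simp [hjb])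
  apply hnotmem
  have hcol : v ⟨j, hjt⟩
      = ∑ k : Γb, star (c k) • v ⟨(k : Fin M), Finset.mem_insert_of_mem k.2⟩ := by
    funext i
    simp only [hv, Finset.sum_apply, Pi.smul_apply, smul_eq_mul]
    exact hcolrel i
  rw [hcol]
  refine Submodule.sum_mem _ fun k _ => Submodule.smul_mem _ _ (Submodule.subset_span ?_)
  exact ⟨⟨(k : Fin M), Finset.mem_insert_of_mem k.2⟩, k.2, rfl⟩

/-- Let `A` be an `L × M` complex matrix every collection of at most `L` of
whose columns is linearly independent. For `i = 1, 2` let `Γᵢ` be a set of at most `L − 1`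
column indices and let `Sᵢ` be Hermitian positive definite on `Γᵢ × Γᵢ` (here encoded as an
`M × M` matrix vanishing outside `Γᵢ × Γᵢ` whose principal `Γᵢ × Γᵢ` submatrix is positive
definite, so that `A Sᵢ Aᴴ = A_{Γᵢ} Sᵢ|_{Γᵢ} A_{Γᵢ}ᴴ`). If `A S₁ Aᴴ = A S₂ Aᴴ`, then
`Γ₁ = Γ₂` and `S₁ = S₂`. -/
theorem stmt7 (L M : ℕ) (A : Matrix (Fin L) (Fin M) ℂ)
    (hA : ∀ t : Finset (Fin M), t.card ≤ L →
      LinearIndependent ℂ (fun j : t => fun i => A i (j : Fin M)))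
    (Γ₁ Γ₂ : Finset (Fin M)) (hΓ₁ : Γ₁.card ≤ L - 1) (hΓ₂ : Γ₂.card ≤ L - 1)
    (S₁ S₂ : Matrix (Fin M) (Fin M) ℂ)
    (hS₁supp : ∀ i j, i ∉ Γ₁ ∨ j ∉ Γ₁ → S₁ i j = 0)
    (hS₂supp : ∀ i j, i ∉ Γ₂ ∨ j ∉ Γ₂ → S₂ i j = 0)
    (hS₁ : (S₁.submatrix (fun i : Γ₁ => (i : Fin M)) (fun j : Γ₁ => (j : Fin M))).PosDef)
    (hS₂ : (S₂.submatrix (fun i : Γ₂ => (i : Fin M)) (fun j : Γ₂ => (j : Fin M))).PosDef)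
    (h : A * S₁ * A.conjTranspose = A * S₂ * A.conjTranspose) :
    Γ₁ = Γ₂ ∧ S₁ = S₂ := by
  have hΓ : Γ₁ = Γ₂ := Finset.Subset.antisymm
    (stmt7_subset_aux A hA Γ₁ Γ₂ hΓ₁ hΓ₂ S₁ S₂ hS₁supp hS₂supp hS₁ h)
    (stmt7_subset_aux A hA Γ₂ Γ₁ hΓ₂ hΓ₁ S₂ S₁ hS₂supp hS₁supp hS₂ h.symm)
  subst hΓ
  refine ⟨rfl, ?_⟩
  have hcard : Γ₁.card ≤ L := le_trans hΓ₁ (Nat.sub_le L 1)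
  -- Hermitian-ness of S₁ and S₂
  have herm : ∀ (S : Matrix (Fin M) (Fin M) ℂ),
      (∀ i j, i ∉ Γ₁ ∨ j ∉ Γ₁ → S i j = 0) →
      ((S.submatrix (fun i : Γ₁ => (i : Fin M)) (fun j : Γ₁ => (j : Fin M))).IsHermitian) →
      S.conjTranspose = S := by
    intro S hsupp hH
    ext i j
    by_cases hi : i ∈ Γ₁
    · by_cases hj : j ∈ Γ₁
      · have := congrFun (congrFun hH ⟨i, hi⟩) ⟨j, hj⟩
        simpa [Matrix.conjTranspose_apply, Matrix.submatrix_apply] using this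
      · simp [Matrix.conjTranspose_apply, hsupp i j (Or.inr hj), hsupp j i (Or.inl hj)]
    · simp [Matrix.conjTranspose_apply, hsupp i j (Or.inl hi), hsupp j i (Or.inr hi)]
  set D : Matrix (Fin M) (Fin M) ℂ := S₁ - S₂ with hD
  have hDsupp : ∀ k c, k ∉ Γ₁ → D k c = 0 := by
    intro k c hk
    simp [hD, hS₁supp k c (Or.inl hk), hS₂supp k c (Or.inl hk)]
  have hAD : A * (D * A.conjTranspose) = 0 := by
    have : A * (D * A.conjTranspose) = A * S₁ * A.conjTranspose - A * S₂ * A.conjTranspose := by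
      rw [hD, Matrix.sub_mul, Matrix.mul_sub, Matrix.mul_assoc, Matrix.mul_assoc]
    rw [this, h, sub_self]
  have hDA : D * A.conjTranspose = 0 := by
    refine stmt7_cancel_aux A hA Γ₁ hcard _ ?_ hAD
    intro k c hk
    simp only [Matrix.mul_apply]
    exact Finset.sum_eq_zero fun l _ => by rw [hDsupp k l hk, zero_mul]
  have hDherm : D.conjTranspose = D := by
    rw [hD, Matrix.conjTranspose_sub, herm S₁ hS₁supp hS₁.1, herm S₂ hS₂supp hS₂.1]
  have hAD2 : A * D = 0 := by
    have := congrArg Matrix.conjTranspose hDA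
    rwa [Matrix.conjTranspose_mul, Matrix.conjTranspose_conjTranspose, hDherm,
      Matrix.conjTranspose_zero] at this
  have hD0 : D = 0 := stmt7_cancel_aux A hA Γ₁ hcard D (fun k c hk => hDsupp k c hk) hAD2
  exact sub_eq_zero.1 (by rw [← hD]; exact hD0)
end

section
/- Let Z be a complex L × L matrix of the form Z = Q Q^H for some complex L × R matrix Q, let A be a complex L × M matrix, and let Γ ⊆ {1, …, M} with A_Γ the submatrix of columns of A indexed by Γ. Then there exists a Hermitian positive semidefinite |Γ| × |Γ| matrix S with Z = A_Γ S A_Γ^H if and only if there exists a |Γ| × R matrix G with Q = A_Γ G. -/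
open scoped ComplexOrder

lemma range_self_mul_conjTranspose_mulVecLin {n m : Type*} [Fintype n] [Fintype m]
    (M : Matrix n m ℂ) :
    LinearMap.range (M * M.conjTranspose).mulVecLin = LinearMap.range M.mulVecLin := by
  apply Submodule.eq_of_le_of_finrank_eq
  · rw [Matrix.mulVecLin_mul]
    exact LinearMap.range_comp_le_range _ _
  · exact Matrix.rank_self_mul_conjTranspose M

/-- If `Q Qᴴ = W Wᴴ` then `Q = W G` for some `G`. -/
lemma exists_factor_of_gram_eq {n r s : Type*} [Fintype n] [Fintype r] [Fintype s]
    [DecidableEq r] (Q : Matrix n r ℂ) (W : Matrix n s ℂ)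
    (h : Q * Q.conjTranspose = W * W.conjTranspose) :
    ∃ G : Matrix s r ℂ, Q = W * G := by
  have hrange : LinearMap.range Q.mulVecLin ≤ LinearMap.range W.mulVecLin := by
    rw [← range_self_mul_conjTranspose_mulVecLin Q, h,
      range_self_mul_conjTranspose_mulVecLin W]
  have hcol : ∀ j : r, ∃ g : s → ℂ, W.mulVec g = fun i => Q i j := by
    intro j
    have hmem : (fun i => Q i j) ∈ LinearMap.range Q.mulVecLin := by
      refine ⟨Pi.single j 1, ?_⟩
      simp [Matrix.mulVecLin_apply]
      rfl
    exact hrange hmem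
  choose g hg using hcol
  refine ⟨fun k j => g j k, ?_⟩
  ext i j
  have := congrFun (hg j) i
  show Q i j = ∑ k, W i k * g j k
  simpa [Matrix.mul_apply, Matrix.mulVec, dotProduct] using this.symm

/-- For `Z = Q Qᴴ` and a column subset `Γ` of an `L × M` matrix `A`, there is
a Hermitian positive semidefinite matrix `S` with `Z = A_Γ S A_Γᴴ` iff there is a matrix `G`
with `Q = A_Γ G`. -/
theorem stmt8 (L R M : ℕ) (Q : Matrix (Fin L) (Fin R) ℂ)
    (Z : Matrix (Fin L) (Fin L) ℂ) (hZ : Z = Q * Q.conjTranspose)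
    (A : Matrix (Fin L) (Fin M) ℂ) (Γ : Finset (Fin M)) :
    (∃ S : Matrix Γ Γ ℂ, S.PosSemidef ∧
        Z = (Matrix.of fun i (j : Γ) => A i (j : Fin M)) * S *
          (Matrix.of fun i (j : Γ) => A i (j : Fin M)).conjTranspose) ↔
      (∃ G : Matrix Γ (Fin R) ℂ,
        Q = (Matrix.of fun i (j : Γ) => A i (j : Fin M)) * G) := by
  set B : Matrix (Fin L) Γ ℂ := Matrix.of fun i (j : Γ) => A i (j : Fin M) with hB
  constructor
  · rintro ⟨S, hS, hZS⟩
    obtain ⟨C, hC⟩ : ∃ C : Matrix Γ Γ ℂ, S = C.conjTranspose * C := by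
      open scoped MatrixOrder in
      obtain ⟨X, hX, -, hXX⟩ :=
        CFC.exists_sqrt_of_isSelfAdjoint_of_quasispectrumRestricts hS.isHermitian
          (QuasispectrumRestricts.nnreal_of_nonneg hS.nonneg)
      exact ⟨X, by rw [← hXX]; exact congrArg (· * X) hX.star_eq.symm⟩
    have key : Q * Q.conjTranspose = (B * C.conjTranspose) * (B * C.conjTranspose).conjTranspose := by
      rw [← hZ, hZS, hC]
      rw [Matrix.conjTranspose_mul, Matrix.conjTranspose_conjTranspose]
      simp only [Matrix.mul_assoc]
    obtain ⟨G', hG'⟩ := exists_factor_of_gram_eq Q (B * C.conjTranspose) key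
    exact ⟨C.conjTranspose * G', by rw [hG', Matrix.mul_assoc]⟩
  · rintro ⟨G, hG⟩
    refine ⟨G * G.conjTranspose, Matrix.posSemidef_self_mul_conjTranspose G, ?_⟩
    rw [hZ, hG, Matrix.conjTranspose_mul]
    simp only [Matrix.mul_assoc]
end
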